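/- The matrix R_{1,0}⁻¹ = [[1,−1],[0,1]] can be written as a product of matrices each of which is conjugate in SL₂(ℤ) to R_{1,0} = [[1,1],[0,1]]; that is, R_{1,0}⁻¹ lies in the submonoid of SL₂(ℤ) generated by the conjugacy class of R_{1,0}. -/

import Mathlib

/-- The matrix `R s t = [[1 - st, s²], [-t², 1 + st]]` in `SL₂(ℤ)`. -/
def R (s t : ℤ) : Matrix.SpecialLinearGroup (Fin 2) ℤ :=
  ⟨!![1 - s * t, s ^ 2; -t ^ 2, 1 + s * t], by
    simp [Matrix.det_fin_two_of]; ring⟩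

/-- The matrix `S = [[0,1],[-1,0]]` used to conjugate `R 1 0` into `R 0 1`. -/
def Smat : Matrix.SpecialLinearGroup (Fin 2) ℤ :=
  ⟨!![0, 1; -1, 0], by simp [Matrix.det_fin_two_of]⟩

/-- `(R 1 0)⁻¹ = [[1,-1],[0,1]]` lies in the submonoid of `SL₂(ℤ)` generated by the
conjugacy class of `R 1 0 = [[1,1],[0,1]]`, i.e. it is a product of conjugates of `R 1 0`. -/
theorem stmt_13 :
    (R 1 0)⁻¹ ∈ Submonoid.closure
      {A : Matrix.SpecialLinearGroup (Fin 2) ℤ | IsConj (R 1 0) A} := by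
  have hT : R 1 0 ∈ {A : Matrix.SpecialLinearGroup (Fin 2) ℤ | IsConj (R 1 0) A} :=
    IsConj.refl _
  have hU : R 0 1 ∈ {A : Matrix.SpecialLinearGroup (Fin 2) ℤ | IsConj (R 1 0) A} := by
    rw [Set.mem_setOf_eq, isConj_iff]
    refine ⟨Smat, ?_⟩
    ext i j
    simp only [Matrix.SpecialLinearGroup.coe_mul, Matrix.SpecialLinearGroup.coe_inv]
    fin_cases i <;> fin_cases j <;>
      simp [R, Smat, Matrix.mul_apply, Fin.sum_univ_two, Matrix.SpecialLinearGroup.SL2_inv_expl,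
        Matrix.adjugate_fin_two]
  have key : (R 1 0)⁻¹ =
      R 0 1 * (R 1 0 * R 0 1) * (R 1 0 * R 0 1) * (R 1 0 * R 0 1) * (R 1 0 * R 0 1) *
        (R 1 0 * R 0 1) := by
    ext i j
    simp only [Matrix.SpecialLinearGroup.coe_mul, Matrix.SpecialLinearGroup.coe_inv]
    fin_cases i <;> fin_cases j <;>
      simp [R, Matrix.mul_apply, Fin.sum_univ_two, Matrix.SpecialLinearGroup.SL2_inv_expl,
        Matrix.adjugate_fin_two]
  rw [key]
  have hT' := Submonoid.subset_closure hT
  have hU' := Submonoid.subset_closure hU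
  exact mul_mem (mul_mem (mul_mem (mul_mem (mul_mem hU' (mul_mem hT' hU')) (mul_mem hT' hU'))
    (mul_mem hT' hU')) (mul_mem hT' hU')) (mul_mem hT' hU')
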